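/- Let T = G ∨ H with supp(T) = supp(G) ⊕ supp(H) and supp(G) ≠ {0}. Then the compliers of G with respect to T are exactly the units i with H(X_i^H | 0) = 0, the alwaystakers of G with respect to T are exactly those with H(X_i^H | 0) = 1, and every unit is either a complier or an alwaystaker of G with respect to T. -/

import Mathlib

open Filter
open scoped Topology

namespace MRD

abbrev Score (K : ℕ) := Fin K → ℝ

/-- The k-th standard basis vector of `ℝ^K`. -/
def stdBasis {K : ℕ} (k : Fin K) : Score K := Pi.single k 1

/-- `T` is a cutoff rule: `T x c = g (1[x_1 > c_1], ..., 1[x_K > c_K])` for a Boolean `g`. -/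
def IsCutoffRule {K : ℕ} (T : Score K → Score K → Bool) : Prop :=
  ∃ g : (Fin K → Bool) → Bool, ∀ x c, T x c = g fun k => decide (c k < x k)

/-- Support directions `S(T)`. -/
def suppDirs {K : ℕ} (T : Score K → Score K → Bool) : Set (Fin K) :=
  {k | ∃ c : Score K, ∃ l : ℝ, T 0 (c + l • stdBasis k) ≠ T 0 c}

/-- `supp(T)`: the span of the standard basis vectors in the support directions. -/
def supp {K : ℕ} (T : Score K → Score K → Bool) : Submodule ℝ (Score K) :=
  Submodule.span ℝ (stdBasis '' suppDirs T)

/-- `N^T`: scores that never affect `T`. -/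
def nspace {K : ℕ} (T : Score K → Score K → Bool) : Set (Score K) :=
  {X | ∀ c, T X c = T 0 c}

/-- The component `X^T` of `X` in `supp(T)` (coordinatewise indicator projection). -/
noncomputable def projT {K : ℕ} (T : Score K → Score K → Bool) (X : Score K) : Score K :=
  (suppDirs T).indicator X

/-- The component `X^{⊥T}` of `X` in `N^T`. -/
noncomputable def perpT {K : ℕ} (T : Score K → Score K → Bool) (X : Score K) : Score K :=
  X - projT T X

/-- Nevertaker of `T` w.r.t. decision rule `D`, for a unit with score `X`. -/
def Nevertaker {K : ℕ} (T : Score K → Score K → Bool) (D : Score K → Bool)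
    (X : Score K) : Prop :=
  ∀ c ∈ supp T, D (perpT T X - c) = false

/-- Alwaystaker of `T` w.r.t. `D`. -/
def Alwaystaker {K : ℕ} (T : Score K → Score K → Bool) (D : Score K → Bool)
    (X : Score K) : Prop :=
  ∀ c ∈ supp T, D (perpT T X - c) = true

/-- Complier of `T` w.r.t. `D`. -/
def Complier {K : ℕ} (T : Score K → Score K → Bool) (D : Score K → Bool)
    (X : Score K) : Prop :=
  ∀ c ∈ supp T, T 0 c = D (perpT T X - c)

/-- Defier of `T` w.r.t. `D`. -/
def Defier {K : ℕ} (T : Score K → Score K → Bool) (D : Score K → Bool)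
    (X : Score K) : Prop :=
  ∀ c ∈ supp T, T 0 c ≠ D (perpT T X - c)

/-- Indecisive: none of the four categories. -/
def Indecisive {K : ℕ} (T : Score K → Score K → Bool) (D : Score K → Bool)
    (X : Score K) : Prop :=
  ¬ Nevertaker T D X ∧ ¬ Alwaystaker T D X ∧ ¬ Complier T D X ∧ ¬ Defier T D X

/-- Nevertaker, cutoff-rule form: `D(X | c) = 0` for all `c ∈ supp(T)`. -/
def NevertakerC {K : ℕ} (T D : Score K → Score K → Bool) (X : Score K) : Prop :=
  ∀ c ∈ supp T, D X c = false

/-- Alwaystaker, cutoff-rule form. -/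
def AlwaystakerC {K : ℕ} (T D : Score K → Score K → Bool) (X : Score K) : Prop :=
  ∀ c ∈ supp T, D X c = true

/-- Complier, cutoff-rule form: `T(X | c) = D(X | c)` for all `c ∈ supp(T)`. -/
def ComplierC {K : ℕ} (T D : Score K → Score K → Bool) (X : Score K) : Prop :=
  ∀ c ∈ supp T, T X c = D X c

/-- Defier, cutoff-rule form. -/
def DefierC {K : ℕ} (T D : Score K → Score K → Bool) (X : Score K) : Prop :=
  ∀ c ∈ supp T, T X c ≠ D X c

lemma stdBasis_apply {K : ℕ} (k j : Fin K) : stdBasis k j = if j = k then 1 else 0 := by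
  simp [stdBasis, Pi.single_apply]

lemma mem_supp {K : ℕ} (T : Score K → Score K → Bool) (c : Score K) :
    c ∈ supp T ↔ ∀ k, k ∉ suppDirs T → c k = 0 := by
  classical
  constructor
  · intro hc
    let M : Submodule ℝ (Score K) :=
      { carrier := {x | ∀ k, k ∉ suppDirs T → x k = 0}
        add_mem' := by intro a b ha hb k hk; simp [ha k hk, hb k hk]
        zero_mem' := by intro k hk; rfl
        smul_mem' := by intro r a ha k hk; simp [ha k hk] }
    have hle : supp T ≤ M := by
      apply Submodule.span_le.mpr
      rintro _ ⟨k, hk, rfl⟩ j hj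
      have hjk : j ≠ k := fun h => hj (h ▸ hk)
      simp [stdBasis, Pi.single_apply, hjk]
    exact hle hc
  · intro h
    have hc : c = ∑ k : Fin K, c k • stdBasis k := by
      funext j
      simp [stdBasis_apply]
    rw [hc]
    apply Submodule.sum_mem
    intro k _
    by_cases hk : k ∈ suppDirs T
    · exact Submodule.smul_mem _ _ (Submodule.subset_span ⟨k, hk, rfl⟩)
    · simp [h k hk]

lemma cutoff_insensitive {K : ℕ} {T : Score K → Score K → Bool} {g : (Fin K → Bool) → Bool}
    (hg : ∀ x c, T x c = g fun k => decide (c k < x k))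
    {k : Fin K} (hk : k ∉ suppDirs T) (b : Fin K → Bool) (v : Bool) :
    g (Function.update b k v) = g b := by
  classical
  have hk' : ∀ (c : Score K) (l : ℝ), T 0 (c + l • stdBasis k) = T 0 c := by
    intro c l
    by_contra hne
    exact hk ⟨c, l, hne⟩
  set c : Score K := fun j => if b j then -1 else 1 with hcdef
  have hb : (fun j => decide (c j < (0 : Score K) j)) = b := by
    funext j
    by_cases hbj : b j <;> simp [hcdef, hbj]
  set l : ℝ := (if v then -1 else 1) - c k with hldef
  have hupd : (fun j => decide ((c + l • stdBasis k) j < (0 : Score K) j))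
      = Function.update b k v := by
    funext j
    by_cases hjk : j = k
    · subst hjk
      simp only [Pi.add_apply, Pi.smul_apply, stdBasis_apply, if_pos rfl, hldef]
      by_cases hv : v <;> simp [Function.update_self, hv]
    · have : (c + l • stdBasis k) j = c j := by
        simp [stdBasis_apply, hjk]
      rw [Function.update_of_ne hjk]
      rw [this]
      by_cases hbj : b j <;> simp [hcdef, hbj]
  have h1 : T 0 (c + l • stdBasis k) = g (Function.update b k v) := by
    rw [hg]; rw [hupd]
  have h2 : T 0 c = g b := by
    rw [hg]; rw [hb]
  rw [← h1, ← h2, hk']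

lemma cutoff_agree {K : ℕ} {T : Score K → Score K → Bool} {g : (Fin K → Bool) → Bool}
    (hg : ∀ x c, T x c = g fun k => decide (c k < x k))
    {b b' : Fin K → Bool} (hbb : ∀ k ∈ suppDirs T, b k = b' k) :
    g b = g b' := by
  classical
  have key : ∀ t : Finset (Fin K), g (fun k => if k ∈ t then b' k else b k) = g b := by
    intro t
    induction t using Finset.induction with
    | empty => simp
    | @insert j t hj ih =>
      have hupd : (fun k => if k ∈ insert j t then b' k else b k)
          = Function.update (fun k => if k ∈ t then b' k else b k) j (b' j) := by
        funext i
        by_cases hij : i = j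
        · subst hij; simp [Function.update_self, hj]
        · simp [Function.update_of_ne hij, Finset.mem_insert, hij]
      rw [hupd]
      by_cases hjs : j ∈ suppDirs T
      · have hbj : b' j = (fun k => if k ∈ t then b' k else b k) j := by
          simp [hj, (hbb j hjs).symm]
        rw [hbj, Function.update_eq_self]
        exact ih
      · rw [cutoff_insensitive hg hjs]
        exact ih
  have h := key Finset.univ
  simpa using h.symm

lemma exists_false_cutoff {K : ℕ} {G : Score K → Score K → Bool} {g : (Fin K → Bool) → Bool}
    (hg : ∀ x c, G x c = g fun k => decide (c k < x k))
    (hGnd : supp G ≠ ⊥) : ∃ c ∈ supp G, G 0 c = false := by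
  classical
  -- suppDirs G is nonempty
  have hne : (suppDirs G).Nonempty := by
    by_contra hnem
    apply hGnd
    rw [Set.not_nonempty_iff_eq_empty] at hnem
    simp [supp, hnem]
  obtain ⟨k, hk⟩ := hne
  obtain ⟨c, l, hcl⟩ := hk
  have : G 0 (c + l • stdBasis k) = false ∨ G 0 c = false := by
    cases h1 : G 0 (c + l • stdBasis k) <;> cases h2 : G 0 c <;> simp_all
  obtain ⟨c₀, hc₀⟩ : ∃ c₀ : Score K, G 0 c₀ = false := by
    rcases this with h | h
    · exact ⟨_, h⟩
    · exact ⟨_, h⟩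
  refine ⟨(suppDirs G).indicator c₀, ?_, ?_⟩
  · rw [mem_supp]
    intro j hj
    exact Set.indicator_of_notMem hj c₀
  · rw [hg]
    rw [hg] at hc₀
    rw [← hc₀]
    apply cutoff_agree hg
    intro j hj
    simp [Set.indicator_of_mem hj]

/-- for `T = G ∨ H` with `supp(T) = supp(G) ⊕ supp(H)`, `supp(G) ≠ {0}`,
the compliers of `G` w.r.t. `T` are exactly the units with `H(X^H | 0) = 0`, the
alwaystakers exactly those with `H(X^H | 0) = 1`, and every unit is one of the two. -/
theorem stmt10 {K : ℕ} (T G H : Score K → Score K → Bool)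
    (hG : IsCutoffRule G) (hH : IsCutoffRule H)
    (hTdef : ∀ x c, T x c = (G x c || H x c))
    (hdisj : Disjoint (supp G) (supp H))
    (hsum : supp T = supp G ⊔ supp H)
    (hGnd : supp G ≠ ⊥) (X : Score K) :
    (Complier G (fun y => T y 0) X ↔ H (projT H X) 0 = false) ∧
    (Alwaystaker G (fun y => T y 0) X ↔ H (projT H X) 0 = true) ∧
    (Complier G (fun y => T y 0) X ∨ Alwaystaker G (fun y => T y 0) X) := by
  classical
  obtain ⟨g, hg⟩ := hG
  obtain ⟨h, hh⟩ := hH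
  -- disjointness of support directions
  have hdirs : ∀ k, k ∈ suppDirs G → k ∉ suppDirs H := by
    intro k hkG hkH
    have h1 : stdBasis k ∈ supp G := Submodule.subset_span ⟨k, hkG, rfl⟩
    have h2 : stdBasis k ∈ supp H := Submodule.subset_span ⟨k, hkH, rfl⟩
    have hmem : stdBasis k ∈ supp G ⊓ supp H := ⟨h1, h2⟩
    have h0 : stdBasis k = 0 := by
      have := hdisj.le_bot hmem
      simpa using this
    have h1' : stdBasis k k = 0 := by rw [h0]; rfl
    rw [stdBasis_apply] at h1'
    simp at h1'
  -- Claim B : G (perpT G X - c) 0 = G 0 c for c ∈ supp G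
  have claimB : ∀ c ∈ supp G, G (perpT G X - c) 0 = G 0 c := by
    intro c hc
    rw [hg, hg]
    apply cutoff_agree hg
    intro k hk
    have hperp : perpT G X k = 0 := by
      simp [perpT, projT, Set.indicator_of_mem hk]
    have : (perpT G X - c) k = -c k := by simp [hperp]
    simp only [this]
    have h0 : (0 : Score K) k = 0 := rfl
    rw [h0]
    rw [decide_eq_decide]
    constructor
    · intro hx; linarith
    · intro hx; linarith
  -- Claim A : H (perpT G X - c) 0 = H (projT H X) 0 for c ∈ supp G
  have claimA : ∀ c ∈ supp G, H (perpT G X - c) 0 = H (projT H X) 0 := by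
    intro c hc
    rw [hh, hh]
    apply cutoff_agree hh
    intro k hk
    have hkG : k ∉ suppDirs G := fun hkG => hdirs k hkG hk
    have hperp : perpT G X k = X k := by
      simp [perpT, projT, Set.indicator_of_notMem hkG]
    have hck : c k = 0 := (mem_supp G c).mp hc k hkG
    have h1 : (perpT G X - c) k = X k := by simp [hperp, hck]
    have h2 : projT H X k = X k := by simp [projT, Set.indicator_of_mem hk]
    rw [h1, h2]
  -- key computation
  have key : ∀ c ∈ supp G, T (perpT G X - c) 0 = (G 0 c || H (projT H X) 0) := by
    intro c hc
    rw [hTdef, claimB c hc, claimA c hc]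
  obtain ⟨c₀, hc₀m, hc₀f⟩ := exists_false_cutoff hg hGnd
  have hComp : ∀ c, c ∈ supp G →
      ((fun y => T y 0) (perpT G X - c) = (G 0 c || H (projT H X) 0)) := by
    intro c hc
    show T (perpT G X - c) 0 = _
    exact key c hc
  cases hβ : H (projT H X) 0 with
  | false =>
    have hCtrue : Complier G (fun y => T y 0) X := by
      intro c hc
      rw [hComp c hc, hβ]
      simp
    refine ⟨?_, ?_, Or.inl hCtrue⟩
    · exact ⟨fun _ => rfl, fun _ => hCtrue⟩
    · constructor
      · intro hA
        have h1 := hA c₀ hc₀m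
        rw [hComp c₀ hc₀m, hβ, hc₀f] at h1
        simp at h1
      · intro hβt; simp at hβt
  | true =>
    have hAtrue : Alwaystaker G (fun y => T y 0) X := by
      intro c hc
      rw [hComp c hc, hβ]
      simp
    refine ⟨?_, ?_, Or.inr hAtrue⟩
    · constructor
      · intro hC
        have h1 := hC c₀ hc₀m
        rw [hComp c₀ hc₀m, hβ, hc₀f] at h1
        simp at h1
      · intro hβf; simp at hβf
    · exact ⟨fun _ => rfl, fun _ => hAtrue⟩

end MRD
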